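/- (Theorem 1, safety part.) Assume ‖q‖ > Δ and let ξ : [0,∞) → ℝ^p be continuously differentiable with ξ'(t) = μ(ξ(t)) for all t ≥ 0 and ξ(0) = ξ_0 satisfying ‖ξ_0 − q‖ ≥ Δ. Then ‖ξ(t) − q‖ ≥ Δ for all t ≥ 0, i.e. the trajectory never enters the open safety ball B_Δ(q). -/

import Mathlib

open scoped RealInnerProductSpace
open Classical

noncomputable def sc (c r : ℝ) : ℝ :=
  if r ≤ c then c ^ ((2:ℝ)/3) * r ^ ((1:ℝ)/3) else r

noncomputable def nuS (c : ℝ) {p : ℕ} (ξ : EuclideanSpace ℝ (Fin p)) :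
    EuclideanSpace ℝ (Fin p) :=
  if ξ = 0 then 0 else (-(sc c ‖ξ‖)⁻¹) • ξ

noncomputable def proj {p : ℕ} (z v : EuclideanSpace ℝ (Fin p)) :
    EuclideanSpace ℝ (Fin p) :=
  v - (⟪z, v⟫ / ‖z‖ ^ 2) • z

noncomputable def nuA (c : ℝ) {p : ℕ} (q ξ : EuclideanSpace ℝ (Fin p)) :
    EuclideanSpace ℝ (Fin p) :=
  proj (ξ - q) (nuS c ξ)

noncomputable def sigmaQ {p : ℕ} (q ξ : EuclideanSpace ℝ (Fin p)) : ℝ :=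
  max 0 (min (⟪ξ, ξ - q⟫ + 1) 1)

noncomputable def alphaS {p : ℕ} (q : EuclideanSpace ℝ (Fin p)) (Δ lam : ℝ)
    (ξ : EuclideanSpace ℝ (Fin p)) : ℝ :=
  max 0 (min ((‖ξ - q‖ - Δ * sigmaQ q ξ) / (lam - Δ)) 1)

noncomputable def alphaA {p : ℕ} (q : EuclideanSpace ℝ (Fin p)) (Δ lam : ℝ)
    (ξ : EuclideanSpace ℝ (Fin p)) : ℝ :=
  sigmaQ q ξ * (1 - alphaS q Δ lam ξ)

noncomputable def mu (c : ℝ) {p : ℕ} (q : EuclideanSpace ℝ (Fin p)) (Δ lam : ℝ)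
    (ξ : EuclideanSpace ℝ (Fin p)) : EuclideanSpace ℝ (Fin p) :=
  alphaS q Δ lam ξ • nuS c ξ + alphaA q Δ lam ξ • nuA c q ξ

lemma sc_pos {c r : ℝ} (hc : 0 < c) (hr : 0 < r) : 0 < sc c r := by
  unfold sc; split_ifs <;> positivity

lemma key_inner (c : ℝ) (hc : 0 < c) {p : ℕ} (q x : EuclideanSpace ℝ (Fin p))
    (Δ lam : ℝ) (hΔ : 0 < Δ) (hlam : Δ < lam) (hx : ‖x - q‖ ≤ Δ) :
    0 ≤ ⟪x - q, mu c q Δ lam x⟫ := by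
  by_cases hxq : x = q
  · simp [hxq, mu]
  have hnz : x - q ≠ 0 := sub_ne_zero.mpr hxq
  have hnorm : (0:ℝ) < ‖x - q‖ := norm_pos_iff.mpr hnz
  have hproj : ⟪x - q, nuA c q x⟫ = 0 := by
    unfold nuA proj
    rw [inner_sub_right, inner_smul_right, real_inner_self_eq_norm_sq]
    field_simp
    ring
  rw [mu, inner_add_right, inner_smul_right, inner_smul_right, hproj, mul_zero, add_zero]
  have hα : 0 ≤ alphaS q Δ lam x := le_max_left _ _
  by_cases hin : 0 ≤ ⟪x, x - q⟫
  · have hσ : sigmaQ q x = 1 := by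
      unfold sigmaQ
      rw [min_eq_right (by linarith), max_eq_right (by norm_num)]
    have : alphaS q Δ lam x = 0 := by
      unfold alphaS
      rw [hσ, mul_one]
      have h1 : (‖x - q‖ - Δ) / (lam - Δ) ≤ 0 :=
        div_nonpos_of_nonpos_of_nonneg (by linarith) (by linarith)
      rw [min_eq_left (by linarith), max_eq_left h1]
    simp [this]
  · push_neg at hin
    have hx0 : x ≠ 0 := by
      rintro rfl
      simp at hin
    have hs : 0 < sc c ‖x‖ := sc_pos hc (norm_pos_iff.mpr hx0)
    have : ⟪x - q, nuS c x⟫ = -(sc c ‖x‖)⁻¹ * ⟪x, x - q⟫ := by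
      rw [nuS, if_neg hx0, inner_smul_right, real_inner_comm]
    rw [this]
    have : 0 ≤ -(sc c ‖x‖)⁻¹ * ⟪x, x - q⟫ := by
      have h1 : (0:ℝ) < (sc c ‖x‖)⁻¹ := inv_pos.mpr hs
      nlinarith
    positivity

theorem stmt8 (p : ℕ) (hp : 1 ≤ p) (c : ℝ) (hc : 0 < c)
    (q : EuclideanSpace ℝ (Fin p)) (Δ lam : ℝ) (hΔ : 0 < Δ) (hlam : Δ < lam)
    (hq : Δ < ‖q‖)
    (ξ : ℝ → EuclideanSpace ℝ (Fin p)) (ξ₀ : EuclideanSpace ℝ (Fin p))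
    (hinit : ξ 0 = ξ₀) (hsafe0 : Δ ≤ ‖ξ₀ - q‖)
    (hode : ∀ t ∈ Set.Ici (0:ℝ), HasDerivAt ξ (mu c q Δ lam (ξ t)) t)
    (hderiv_cont : ContinuousOn (fun t => mu c q Δ lam (ξ t)) (Set.Ici (0:ℝ))) :
    ∀ t ∈ Set.Ici (0:ℝ), Δ ≤ ‖ξ t - q‖ := by
  set g : ℝ → ℝ := fun t => ‖ξ t - q‖ ^ 2 with hgdef
  have hg : ∀ t ∈ Set.Ici (0:ℝ),
      HasDerivAt g (2 * ⟪ξ t - q, mu c q Δ lam (ξ t)⟫) t := by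
    intro t ht
    have hf : HasDerivAt (fun t => ξ t - q) (mu c q Δ lam (ξ t)) t :=
      (hode t ht).sub_const q
    have := (hf.inner ℝ hf)
    have heq : (fun t => ⟪ξ t - q, ξ t - q⟫) = g := by
      funext u; exact real_inner_self_eq_norm_sq _
    rw [heq] at this
    have h2 : ⟪mu c q Δ lam (ξ t), ξ t - q⟫ = ⟪ξ t - q, mu c q Δ lam (ξ t)⟫ := real_inner_comm _ _
    rw [h2, ← two_mul] at this; exact this
  have hgc : ContinuousOn g (Set.Ici 0) := fun t ht =>
    ((hg t ht).continuousAt).continuousWithinAt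
  -- norm bound from g
  have hnormg : ∀ t, Δ ^ 2 ≤ g t → Δ ≤ ‖ξ t - q‖ := by
    intro t h
    have h' : Δ ^ 2 ≤ ‖ξ t - q‖ ^ 2 := h
    nlinarith [norm_nonneg (ξ t - q)]
  have hg0 : Δ ^ 2 ≤ g 0 := by
    rw [hgdef]; simp only [hinit]
    nlinarith [hsafe0]
  intro t₁ ht₁
  by_contra hcon
  push_neg at hcon
  have hgt₁ : g t₁ < Δ ^ 2 := by
    simp only [hgdef]
    nlinarith [norm_nonneg (ξ t₁ - q), hcon]
  set S : Set ℝ := Set.Icc 0 t₁ ∩ g ⁻¹' Set.Ici (Δ ^ 2) with hSdef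
  have hS0 : (0:ℝ) ∈ S := ⟨⟨le_refl _, ht₁⟩, hg0⟩
  have hSbdd : BddAbove S := ⟨t₁, fun x hx => hx.1.2⟩
  have hSclosed : IsClosed S := by
    apply ContinuousOn.preimage_isClosed_of_isClosed
      (hgc.mono (fun x hx => hx.1)) isClosed_Icc isClosed_Ici
  have hs_mem : sSup S ∈ S := hSclosed.csSup_mem ⟨0, hS0⟩ hSbdd
  set s := sSup S with hsdef
  clear_value s
  have hs0 : 0 ≤ s := hs_mem.1.1
  have hst₁ : s ≤ t₁ := hs_mem.1.2
  have hgs : Δ ^ 2 ≤ g s := hs_mem.2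
  have hslt : s < t₁ := lt_of_le_of_ne hst₁ (by rintro rfl; linarith)
  -- on (s, t₁], g < Δ^2
  have hlt : ∀ x, s < x → x ≤ t₁ → g x < Δ ^ 2 := by
    intro x hx1 hx2
    by_contra h
    push_neg at h
    have : x ∈ S := ⟨⟨by linarith, hx2⟩, h⟩
    rw [hsdef] at hx1
    exact absurd (le_csSup hSbdd this) (not_le.mpr hx1)
  -- monotone on [s, t₁]
  have hmono : MonotoneOn g (Set.Icc s t₁) := by
    apply monotoneOn_of_deriv_nonneg (convex_Icc s t₁)
      (hgc.mono (fun x hx => le_trans hs0 hx.1))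
    · intro x hx
      rw [interior_Icc] at hx
      exact ((hg x (le_trans hs0 hx.1.le)).differentiableAt).differentiableWithinAt
    · intro x hx
      rw [interior_Icc] at hx
      have hx0 : x ∈ Set.Ici (0:ℝ) := le_trans hs0 hx.1.le
      rw [(hg x hx0).deriv]
      have hb : ‖ξ x - q‖ ≤ Δ := by
        have h2 : ‖ξ x - q‖ ^ 2 < Δ ^ 2 := hlt x hx.1 hx.2.le
        nlinarith [norm_nonneg (ξ x - q)]
      have := key_inner c hc q (ξ x) Δ lam hΔ hlam hb
      linarith
  have := hmono ⟨le_refl s, hst₁⟩ ⟨hslt.le, le_refl t₁⟩ hslt.le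
  linarith
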